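/- Let X be a separable infinite-dimensional real Hilbert space with orthonormal basis (eₙ)_{n≥1}, let ηₙ, μₙ ∈ (0,1) satisfy ηₙ² + μₙ² = 1 for all n ≥ 1 with (ηₙ) ∈ ℓ², set zₙ := ηₙ e_{2n−1} − μₙ e_{2n}, c* := Σ_{n≥1} ηₙ e_{2n}, P := {Σ_{n≥1} λₙ zₙ : (λₙ) ∈ ℓ², λₙ ≥ 0 for all n}, L := the closed linear span of {e_{2n−1} : n ≥ 1}, A := the orthogonal projection onto L (viewed as a map X → Y := X), and v(y) := inf{⟨x, c*⟩ : x ∈ P, Ax = y}. Then: dom v = {Σ_{n≥1} γₙ e_{2n−1} : (γₙ/ηₙ)_{n≥1} ∈ ℓ², γₙ ≥ 0 for all n}; for each y ∈ dom v the feasible set {x ∈ P : Ax = y} is a singleton; and for y = Σ_{n≥1} γₙ e_{2n−1} ∈ dom v one has v(y) = −Σ_{n≥1} μₙ γₙ ≤ 0 = v(0). In particular, v is a proper sublinear function. -/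

import Mathlib

open MeasureTheory

section Aux

variable {X : Type*} [NormedAddCommGroup X] [InnerProductSpace ℝ X] [CompleteSpace X]

lemma aux_summable_smul {e : ℕ → X} (he : Orthonormal ℝ e) {f : ℕ → ℝ}
    (hf : Summable fun n => f n ^ 2) : Summable fun n => f n • e n := by
  have h2 : Summable fun i => (LinearIsometry.toSpanSingleton ℝ X (he.1 i)) (f i) :=
    (he.orthogonalFamily.summable_iff_norm_sq_summable f).mpr
      (by simpa [Real.norm_eq_abs, sq_abs] using hf)
  simpa [LinearIsometry.toSpanSingleton_apply] using h2

lemma aux_coef {e : ℕ → X} (he : Orthonormal ℝ e) {f : ℕ → ℝ} {x : X}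
    (hx : HasSum (fun n => f n • e n) x) (k : ℕ) : (inner ℝ (e k) x : ℝ) = f k := by
  classical
  have h1 := hx.mapL (innerSL ℝ (e k))
  have h2 : (fun n => (innerSL ℝ (e k)) (f n • e n)) = fun n => if n = k then f k else 0 := by
    funext n
    simp only [innerSL_apply_apply, real_inner_smul_right]
    rw [orthonormal_iff_ite.mp he k n]
    by_cases h : n = k
    · simp [h]
    · have hk : ¬k = n := fun h' => h h'.symm
      simp [h, hk]
  rw [h2] at h1
  simpa using h1.unique (hasSum_ite_eq k (f k))

end Aux

theorem stmt11 {X : Type*} [NormedAddCommGroup X] [InnerProductSpace ℝ X]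
    [CompleteSpace X]
    (b : HilbertBasis ℕ ℝ X)
    (η μ : ℕ → ℝ) (hη : ∀ n, η n ∈ Set.Ioo (0 : ℝ) 1) (hμ : ∀ n, μ n ∈ Set.Ioo (0 : ℝ) 1)
    (hημ : ∀ n, η n ^ 2 + μ n ^ 2 = 1) (hη2 : Summable (fun n => η n ^ 2))
    (z : ℕ → X) (hz : ∀ n, z n = η n • b (2 * n) - μ n • b (2 * n + 1))
    (cstar : X) (hc : HasSum (fun n => η n • b (2 * n + 1)) cstar)
    (P : Set X)
    (hP : P = {x : X | ∃ l : ℕ → ℝ, (∀ n, 0 ≤ l n) ∧ Summable (fun n => l n ^ 2) ∧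
      HasSum (fun n => l n • z n) x})
    (L : Submodule ℝ X)
    (hL : L = (Submodule.span ℝ (Set.range fun n => b (2 * n))).topologicalClosure)
    (A : X → X)
    (hA : ∀ x : X, A x ∈ L ∧ ∀ u ∈ L, (inner ℝ (x - A x) u : ℝ) = 0)
    (v : X → EReal)
    (hv : ∀ y : X, v y = ⨅ (x : X) (_ : x ∈ P ∧ A x = y), ((inner ℝ x cstar : ℝ) : EReal)) :
    ({y : X | v y < ⊤} = {y : X | ∃ γ : ℕ → ℝ, (∀ n, 0 ≤ γ n) ∧
      Summable (fun n => (γ n / η n) ^ 2) ∧ HasSum (fun n => γ n • b (2 * n)) y}) ∧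
    (∀ y : X, v y < ⊤ → ∃! x : X, x ∈ P ∧ A x = y) ∧
    (∀ γ : ℕ → ℝ, (∀ n, 0 ≤ γ n) → Summable (fun n => (γ n / η n) ^ 2) →
      ∀ y : X, HasSum (fun n => γ n • b (2 * n)) y →
        v y = ((-∑' n, μ n * γ n : ℝ) : EReal) ∧ v y ≤ 0) ∧
    v 0 = 0 ∧
    ((∀ y : X, v y ≠ ⊥) ∧ (∃ y : X, v y ≠ ⊤)) ∧
    (∀ t : ℝ, 0 < t → ∀ y : X, v (t • y) = (t : EReal) * v y) ∧
    (∀ y y' : X, v y < ⊤ → v y' < ⊤ → v (y + y') ≤ v y + v y') := by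
  classical
  have hηpos : ∀ n, 0 < η n := fun n => (hη n).1
  have hηne : ∀ n, η n ≠ 0 := fun n => (hηpos n).ne'
  have hbo : Orthonormal ℝ b := b.orthonormal
  have hbij : ∀ i j, (inner ℝ (b i) (b j) : ℝ) = if i = j then 1 else 0 :=
    orthonormal_iff_ite.mp hbo
  have hb2on : Orthonormal ℝ (fun n => b (2 * n)) :=
    hbo.comp (fun n => 2 * n) (fun a c h => by exact Nat.eq_of_mul_eq_mul_left (by norm_num) h)
  -- inner ℝ products of z with basis vectors
  have hz_even : ∀ n m, (inner ℝ (z n) (b (2 * m)) : ℝ) = if n = m then η n else 0 := by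
    intro n m
    rw [hz n, inner_sub_left, real_inner_smul_left, real_inner_smul_left, hbij, hbij]
    have h1 : (2 * n + 1 = 2 * m) = False := by simp; omega
    by_cases h : n = m
    · subst h; simp [h1]
    · have : (2 * n = 2 * m) = False := by simp; omega
      simp [h, this, h1]
  have hz_odd : ∀ n m, (inner ℝ (z n) (b (2 * m + 1)) : ℝ) = if n = m then -μ n else 0 := by
    intro n m
    rw [hz n, inner_sub_left, real_inner_smul_left, real_inner_smul_left, hbij, hbij]
    have h1 : (2 * n = 2 * m + 1) = False := by simp; omega
    by_cases h : n = m
    · subst h; simp [h1]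
    · have : (2 * n + 1 = 2 * m + 1) = False := by simp; omega
      simp [h, this, h1]
  -- z is orthonormal
  have hzo : Orthonormal ℝ z := by
    rw [orthonormal_iff_ite]
    intro i j
    rw [show z j = η j • b (2 * j) - μ j • b (2 * j + 1) from hz j,
      inner_sub_right, real_inner_smul_right, real_inner_smul_right, hz_even, hz_odd]
    by_cases h : i = j
    · subst h; rw [if_pos rfl, if_pos rfl, if_pos rfl]; linear_combination hημ i
    · simp [h]
  -- inner ℝ of z with cstar
  have hzc : ∀ n, (inner ℝ (z n) cstar : ℝ) = -(η n * μ n) := by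
    intro n
    have h1 := hc.mapL (innerSL ℝ (z n))
    have h2 : (fun m => (innerSL ℝ (z n)) (η m • b (2 * m + 1))) =
        fun m => if m = n then -(η n * μ n) else 0 := by
      funext m
      simp only [innerSL_apply_apply, real_inner_smul_right]
      rw [hz_odd]
      by_cases h : n = m
      · subst h; rw [if_pos rfl, if_pos rfl]; ring
      · rw [if_neg h, if_neg (fun h' => h h'.symm), mul_zero]
    rw [h2] at h1
    simpa using h1.unique (hasSum_ite_eq n (-(η n * μ n)))
  -- membership of even sums in L
  have hmemL : ∀ (γ : ℕ → ℝ) (w : X), HasSum (fun n => γ n • b (2 * n)) w → w ∈ L := by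
    intro γ w h
    rw [hL, ← SetLike.mem_coe, Submodule.topologicalClosure_coe]
    refine mem_closure_of_tendsto h (Filter.Eventually.of_forall fun s => ?_)
    exact Submodule.sum_mem _ fun n _ => Submodule.smul_mem _ _ (Submodule.subset_span ⟨n, rfl⟩)
  -- characterization of the projection
  have hAeq : ∀ x w : X, w ∈ L → (∀ n, (inner ℝ (x - w) (b (2 * n)) : ℝ) = 0) → A x = w := by
    intro x w hwL hwo
    obtain ⟨hAL, hAperp⟩ := hA x
    have hker : ∀ u ∈ L, (inner ℝ (x - w) u : ℝ) = 0 := by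
      intro u hu
      have hle : L ≤ LinearMap.ker (innerSL ℝ (x - w) : X →ₗ[ℝ] ℝ) := by
        rw [hL]
        refine Submodule.topologicalClosure_minimal _ ?_ ?_
        · rw [Submodule.span_le]
          rintro _ ⟨n, rfl⟩
          simp only [SetLike.mem_coe, LinearMap.mem_ker, ContinuousLinearMap.coe_coe, innerSL_apply_apply]
          exact hwo n
        · exact ContinuousLinearMap.isClosed_ker (innerSL ℝ (x - w))
      have hmem := hle hu
      rwa [LinearMap.mem_ker, ContinuousLinearMap.coe_coe, innerSL_apply_apply] at hmem
    have hm : A x - w ∈ L := Submodule.sub_mem L hAL hwL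
    have h0 : (inner ℝ (A x - w) (A x - w) : ℝ) = 0 := by
      have e1 : (inner ℝ (A x - w) (A x - w) : ℝ) =
          inner ℝ (x - w) (A x - w) - inner ℝ (x - A x) (A x - w) := by
        rw [← inner_sub_left]; congr 1; abel
      rw [e1, hker _ hm, hAperp _ hm, sub_zero]
    exact sub_eq_zero.mp (inner_self_eq_zero.mp h0)
  -- key computation for elements of P
  have hkey : ∀ (l : ℕ → ℝ) (x : X), Summable (fun n => l n ^ 2) →
      HasSum (fun n => l n • z n) x →
      HasSum (fun n => (l n * η n) • b (2 * n)) (A x) ∧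
      (inner ℝ x cstar : ℝ) = -∑' n, μ n * (l n * η n) := by
    intro l x hl2 hxs
    have hγ2 : Summable fun n => (l n * η n) ^ 2 := by
      refine Summable.of_nonneg_of_le (fun n => sq_nonneg _) (fun n => ?_) hl2
      rw [mul_pow]
      have h1 : η n ^ 2 ≤ 1 := by nlinarith [(hη n).1, (hη n).2]
      nlinarith [sq_nonneg (l n)]
    have hws : Summable fun n => (l n * η n) • b (2 * n) := aux_summable_smul hb2on hγ2
    set w := ∑' n, (l n * η n) • b (2 * n) with hw
    have hwsum : HasSum (fun n => (l n * η n) • b (2 * n)) w := hws.hasSum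
    -- inner ℝ of x with even basis vectors
    have hxe : ∀ k, (inner ℝ (b (2 * k)) x : ℝ) = l k * η k := by
      intro k
      have h1 := hxs.mapL (innerSL ℝ (b (2 * k)))
      have h2 : (fun n => (innerSL ℝ (b (2 * k))) (l n • z n)) =
          fun n => if n = k then l k * η k else 0 := by
        funext n
        simp only [innerSL_apply_apply, real_inner_smul_right]
        rw [real_inner_comm, hz_even]
        by_cases h : n = k
        · subst h; simp
        · simp [h]
      rw [h2] at h1
      simpa using h1.unique (hasSum_ite_eq k (l k * η k))
    have hAx : A x = w := by
      refine hAeq x w (hmemL _ _ hwsum) fun n => ?_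
      rw [inner_sub_left, real_inner_comm _ x, real_inner_comm _ w, hxe n,
        aux_coef hb2on hwsum n, sub_self]
    refine ⟨hAx ▸ hwsum, ?_⟩
    have h1 := hxs.mapL (innerSL ℝ cstar)
    have h2 : (fun n => (innerSL ℝ cstar) (l n • z n)) =
        fun n => -(μ n * (l n * η n)) := by
      funext n
      simp only [innerSL_apply_apply, real_inner_smul_right]
      rw [real_inner_comm, hzc]
      ring
    rw [h2] at h1
    have h3 : HasSum (fun n => μ n * (l n * η n)) (-(inner ℝ cstar x : ℝ)) := by
      simpa using h1.neg
    rw [real_inner_comm, ← neg_neg (inner ℝ cstar x : ℝ), h3.tsum_eq.symm]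
  -- summability of μ·γ
  have hsummu : ∀ γ : ℕ → ℝ, (∀ n, 0 ≤ γ n) → Summable (fun n => (γ n / η n) ^ 2) →
      Summable fun n => μ n * γ n := by
    intro γ hγ0 hγ2
    refine Summable.of_nonneg_of_le (fun n => mul_nonneg (hμ n).1.le (hγ0 n))
      (fun n => ?_) (((hη2.add hγ2).div_const 2))
    have h1 : γ n = η n * (γ n / η n) :=
      ((div_mul_cancel₀ (γ n) (hηne n)).symm).trans (mul_comm _ _)
    have h2 : μ n * γ n ≤ γ n := by nlinarith [(hμ n).1, (hμ n).2, hγ0 n]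
    have h3 : 2 * (η n * (γ n / η n)) ≤ η n ^ 2 + (γ n / η n) ^ 2 := by
      nlinarith [sq_nonneg (η n - γ n / η n)]
    show μ n * γ n ≤ (η n ^ 2 + (γ n / η n) ^ 2) / 2
    linarith [h1 ▸ h2]
  -- feasibility from γ
  have hfeas : ∀ (γ : ℕ → ℝ), (∀ n, 0 ≤ γ n) → Summable (fun n => (γ n / η n) ^ 2) →
      ∀ y, HasSum (fun n => γ n • b (2 * n)) y →
      ∃ x, (x ∈ P ∧ A x = y) ∧ (inner ℝ x cstar : ℝ) = -∑' n, μ n * γ n := by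
    intro γ hγ0 hγ2 y hy
    set l := fun n => γ n / η n with hldef
    have hl0 : ∀ n, 0 ≤ l n := fun n => div_nonneg (hγ0 n) (hηpos n).le
    have hxsum : Summable fun n => l n • z n := aux_summable_smul hzo hγ2
    set x := ∑' n, l n • z n with hx
    have hxs : HasSum (fun n => l n • z n) x := hxsum.hasSum
    have hlη : ∀ n, l n * η n = γ n := fun n => div_mul_cancel₀ _ (hηne n)
    obtain ⟨hAx, hval⟩ := hkey l x hγ2 hxs
    have hA' : A x = y := by
      have h1 : HasSum (fun n => γ n • b (2 * n)) (A x) := by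
        simpa only [hlη] using hAx
      exact h1.unique hy
    refine ⟨x, ⟨⟨?_, hA'⟩, by simpa only [hlη] using hval⟩⟩
    rw [hP]; exact ⟨l, hl0, hγ2, hxs⟩
  -- γ from feasibility
  have hfeas' : ∀ y x, x ∈ P → A x = y →
      ∃ γ : ℕ → ℝ, (∀ n, 0 ≤ γ n) ∧ Summable (fun n => (γ n / η n) ^ 2) ∧
        HasSum (fun n => γ n • b (2 * n)) y ∧
        (inner ℝ x cstar : ℝ) = -∑' n, μ n * γ n := by
    intro y x hx hAx
    rw [hP] at hx
    obtain ⟨l, hl0, hl2, hls⟩ := hx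
    obtain ⟨hAsum, hval⟩ := hkey l x hl2 hls
    refine ⟨fun n => l n * η n, fun n => mul_nonneg (hl0 n) (hηpos n).le, ?_,
      hAx ▸ hAsum, hval⟩
    have heq : (fun n => (l n * η n / η n) ^ 2) = fun n => l n ^ 2 := by
      funext n; rw [mul_div_assoc, div_self (hηne n), mul_one]
    rw [heq]; exact hl2
  -- uniqueness of feasible points
  have huniq : ∀ y x x', (x ∈ P ∧ A x = y) → (x' ∈ P ∧ A x' = y) → x = x' := by
    rintro y x x' ⟨hx, hAx⟩ ⟨hx', hAx'⟩
    rw [hP] at hx hx'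
    obtain ⟨l, hl0, hl2, hls⟩ := hx
    obtain ⟨l', hl0', hl2', hls'⟩ := hx'
    have h1 := (hkey l x hl2 hls).1
    have h2 := (hkey l' x' hl2' hls').1
    rw [hAx] at h1; rw [hAx'] at h2
    have hll : l = l' := by
      funext k
      have e1 := aux_coef hb2on h1 k
      have e2 := aux_coef hb2on h2 k
      exact mul_right_cancel₀ (hηne k) (e1.symm.trans e2)
    exact hls.unique (hll ▸ hls')
  -- value of v at infeasible points
  have hvtop : ∀ y, (¬∃ x, x ∈ P ∧ A x = y) → v y = ⊤ := by
    intro y h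
    rw [hv y, iInf_eq_top]
    intro x
    rw [iInf_eq_top]
    intro hx
    exact absurd ⟨x, hx⟩ h
  -- value of v at feasible points
  have hvval : ∀ y x₀, (x₀ ∈ P ∧ A x₀ = y) → v y = ((inner ℝ x₀ cstar : ℝ) : EReal) := by
    intro y x₀ h₀
    rw [hv y]
    apply le_antisymm
    · exact iInf_le_of_le x₀ (iInf_le _ h₀)
    · refine le_iInf fun x => le_iInf fun hx => ?_
      rw [huniq y x x₀ hx h₀]
  -- the third conclusion, proved first as it is used repeatedly
  have part3 : ∀ γ : ℕ → ℝ, (∀ n, 0 ≤ γ n) → Summable (fun n => (γ n / η n) ^ 2) →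
      ∀ y : X, HasSum (fun n => γ n • b (2 * n)) y →
        v y = ((-∑' n, μ n * γ n : ℝ) : EReal) ∧ v y ≤ 0 := by
    intro γ hγ0 hγ2 y hy
    obtain ⟨x, hx, hval⟩ := hfeas γ hγ0 hγ2 y hy
    have h1 : v y = ((-∑' n, μ n * γ n : ℝ) : EReal) := by
      rw [hvval y x hx, hval]
    refine ⟨h1, ?_⟩
    rw [h1]
    rw [← EReal.coe_zero, EReal.coe_le_coe_iff]
    simp only [neg_nonpos]
    exact tsum_nonneg fun n => mul_nonneg (hμ n).1.le (hγ0 n)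
  -- v 0 = 0
  have hzero : v 0 = 0 := by
    have h1 := (part3 (fun _ => 0) (fun _ => le_rfl)
      (by simpa using summable_zero) 0 (by simpa using hasSum_zero)).1
    simpa using h1
  -- domain characterization as an iff
  have hdom : ∀ y, v y < ⊤ ↔ ∃ γ : ℕ → ℝ, (∀ n, 0 ≤ γ n) ∧
      Summable (fun n => (γ n / η n) ^ 2) ∧ HasSum (fun n => γ n • b (2 * n)) y := by
    intro y
    constructor
    · intro hlt
      by_cases h : ∃ x, x ∈ P ∧ A x = y
      · obtain ⟨x, hx⟩ := h
        obtain ⟨γ, hγ0, hγ2, hy, _⟩ := hfeas' y x hx.1 hx.2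
        exact ⟨γ, hγ0, hγ2, hy⟩
      · rw [hvtop y h] at hlt; exact absurd hlt (lt_irrefl _)
    · rintro ⟨γ, hγ0, hγ2, hy⟩
      rw [(part3 γ hγ0 hγ2 y hy).1]
      exact EReal.coe_lt_top _
  refine ⟨?_, ?_, part3, hzero, ⟨?_, ⟨0, by rw [hzero, ← EReal.coe_zero]; exact EReal.coe_ne_top 0⟩⟩, ?_, ?_⟩
  · ext y
    simpa [Set.mem_setOf_eq] using hdom y
  · intro y hlt
    obtain ⟨γ, hγ0, hγ2, hy⟩ := (hdom y).mp hlt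
    obtain ⟨x, hx, _⟩ := hfeas γ hγ0 hγ2 y hy
    exact ⟨x, hx, fun x' hx' => huniq y x' x hx' hx⟩
  · intro y
    by_cases h : ∃ x, x ∈ P ∧ A x = y
    · obtain ⟨x, hx⟩ := h
      rw [hvval y x hx]
      exact EReal.coe_ne_bot _
    · rw [hvtop y h]
      exact top_ne_bot
  · -- positive homogeneity
    intro t ht y
    by_cases h : ∃ γ : ℕ → ℝ, (∀ n, 0 ≤ γ n) ∧
        Summable (fun n => (γ n / η n) ^ 2) ∧ HasSum (fun n => γ n • b (2 * n)) y
    · obtain ⟨γ, hγ0, hγ2, hy⟩ := h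
      have hγ0' : ∀ n, 0 ≤ t * γ n := fun n => mul_nonneg ht.le (hγ0 n)
      have hγ2' : Summable fun n => (t * γ n / η n) ^ 2 := by
        have heq : (fun n => (t * γ n / η n) ^ 2) = fun n => t ^ 2 * (γ n / η n) ^ 2 := by
          funext n; rw [mul_div_assoc, mul_pow]
        rw [heq]; exact hγ2.mul_left _
      have hy' : HasSum (fun n => (t * γ n) • b (2 * n)) (t • y) := by
        have := hy.const_smul t
        simpa only [smul_smul] using this
      rw [(part3 _ hγ0' hγ2' _ hy').1, (part3 γ hγ0 hγ2 y hy).1]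
      have heq2 : (fun n => μ n * (t * γ n)) = fun n => t * (μ n * γ n) := by
        funext n; ring
      rw [heq2, tsum_mul_left, ← EReal.coe_mul]
      congr 1
      ring
    · have h' : ¬∃ γ : ℕ → ℝ, (∀ n, 0 ≤ γ n) ∧
          Summable (fun n => (γ n / η n) ^ 2) ∧
          HasSum (fun n => γ n • b (2 * n)) (t • y) := by
        rintro ⟨γ, hγ0, hγ2, hy⟩
        refine h ⟨fun n => t⁻¹ * γ n, fun n => mul_nonneg (inv_nonneg.mpr ht.le) (hγ0 n), ?_, ?_⟩
        · have heq : (fun n => (t⁻¹ * γ n / η n) ^ 2) =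
              fun n => (t⁻¹) ^ 2 * (γ n / η n) ^ 2 := by
            funext n; rw [mul_div_assoc, mul_pow]
          rw [heq]; exact hγ2.mul_left _
        · have := hy.const_smul t⁻¹
          rw [inv_smul_smul₀ ht.ne'] at this
          simpa only [smul_smul] using this
      have htop : v y = ⊤ := by
        by_contra hne
        exact h ((hdom y).mp (lt_top_iff_ne_top.mpr hne))
      have htop' : v (t • y) = ⊤ := by
        by_contra hne
        exact h' ((hdom (t • y)).mp (lt_top_iff_ne_top.mpr hne))
      rw [htop, htop', EReal.coe_mul_top_of_pos ht]
  · -- subadditivity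
    intro y y' hlt hlt'
    obtain ⟨γ, hγ0, hγ2, hy⟩ := (hdom y).mp hlt
    obtain ⟨γ', hγ0', hγ2', hy'⟩ := (hdom y').mp hlt'
    have hs0 : ∀ n, 0 ≤ γ n + γ' n := fun n => add_nonneg (hγ0 n) (hγ0' n)
    have hs2 : Summable fun n => ((γ n + γ' n) / η n) ^ 2 := by
      refine Summable.of_nonneg_of_le (fun n => sq_nonneg _) (fun n => ?_)
        ((hγ2.mul_left 2).add (hγ2'.mul_left 2))
      rw [add_div]
      nlinarith [sq_nonneg (γ n / η n - γ' n / η n)]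
    have hssum : HasSum (fun n => (γ n + γ' n) • b (2 * n)) (y + y') := by
      have := hy.add hy'
      simpa only [add_smul] using this
    rw [(part3 _ hs0 hs2 _ hssum).1, (part3 γ hγ0 hγ2 y hy).1,
      (part3 γ' hγ0' hγ2' y' hy').1]
    have heq : (fun n => μ n * (γ n + γ' n)) =
        fun n => μ n * γ n + μ n * γ' n := by
      funext n; ring
    rw [heq, Summable.tsum_add (hsummu γ hγ0 hγ2) (hsummu γ' hγ0' hγ2'), neg_add, EReal.coe_add]
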